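/- A totally antisymmetric 3-tensor χ on ℝ⁷ is of the form χ = i_φ(h) for some traceless symmetric real 7×7 matrix h if and only if Σ_{a,b,c} χ_{abc} φ₀_{abc} = 0 and Σ_{m,n,p} χ_{mnp} ψ₀_{mnpa} = 0 for every index a. (This is the characterization Λ³₂₇ = {χ ∈ Λ³ : χ ∧ φ₀ = 0 and χ ∧ ψ₀ = 0}.) -/
import Mathlib


open scoped BigOperators
set_option maxHeartbeats 4000000
set_option maxRecDepth 100000
set_option linter.unusedTactic false
set_option linter.unreachableTactic false

noncomputable section

/-- Kronecker delta `δ` on `Fin 7`. -/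
def kd (a b : Fin 7) : ℝ := if a = b then 1 else 0

/-- The elementary alternating 3-tensor supported on permutations of `(i, j, k)`. -/
def trip (i j k a b c : Fin 7) : ℝ :=
  (if a = i ∧ b = j ∧ c = k then (1 : ℝ) else 0)
    + (if a = j ∧ b = k ∧ c = i then (1 : ℝ) else 0)
    + (if a = k ∧ b = i ∧ c = j then (1 : ℝ) else 0)
    - (if a = i ∧ b = k ∧ c = j then (1 : ℝ) else 0)
    - (if a = k ∧ b = j ∧ c = i then (1 : ℝ) else 0)
    - (if a = j ∧ b = i ∧ c = k then (1 : ℝ) else 0)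

/-- The standard `G₂` 3-form `φ₀` on `ℝ⁷`.  Indices `0, …, 6` correspond to the
paper's `1, …, 7`, so this is
`e^{123} + e^{145} + e^{167} + e^{246} - e^{257} - e^{347} - e^{356}`. -/
def phi0 (a b c : Fin 7) : ℝ :=
  trip 0 1 2 a b c + trip 0 3 4 a b c + trip 0 5 6 a b c + trip 1 3 5 a b c
    - trip 1 4 6 a b c - trip 2 3 6 a b c - trip 2 4 5 a b c

/-- The totally antisymmetric Levi-Civita symbol `ε̂` on seven indices,
with `ε̂_{1234567} = 1`. -/
def eps7 (a b c d e f g : Fin 7) : ℝ :=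
  if h : Function.Bijective ![a, b, c, d, e, f, g] then
    ((Equiv.Perm.sign (Equiv.ofBijective _ h) : ℤ) : ℝ)
  else 0

/-- The 4-form `ψ₀ = ⋆φ₀`, the Euclidean Hodge dual of `φ₀`:
`ψ₀ = e^{4567} + e^{2367} + e^{2345} + e^{1357} - e^{1346} - e^{1256} - e^{1247}`. -/
def psi0 (m n p q : Fin 7) : ℝ :=
  (1 / 6 : ℝ) * ∑ r, ∑ s, ∑ t, eps7 m n p q r s t * phi0 r s t

/-- The map `i_φ` sending a symmetric matrix `h` to the 3-tensor
`i_φ(h)_{abc} = (1/3) Σ_d (h_{ad} φ₀_{dbc} + h_{bd} φ₀_{adc} + h_{cd} φ₀_{abd})`. -/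
def iphi (h : Matrix (Fin 7) (Fin 7) ℝ) (a b c : Fin 7) : ℝ :=
  (1 / 3 : ℝ) * ∑ d, (h a d * phi0 d b c + h b d * phi0 a d c + h c d * phi0 a b d)

/-! ℤ mirrors -/

def tripZ (i j k a b c : Fin 7) : ℤ :=
  (if a = i ∧ b = j ∧ c = k then (1 : ℤ) else 0)
    + (if a = j ∧ b = k ∧ c = i then (1 : ℤ) else 0)
    + (if a = k ∧ b = i ∧ c = j then (1 : ℤ) else 0)
    - (if a = i ∧ b = k ∧ c = j then (1 : ℤ) else 0)
    - (if a = k ∧ b = j ∧ c = i then (1 : ℤ) else 0)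
    - (if a = j ∧ b = i ∧ c = k then (1 : ℤ) else 0)

def phZ (a b c : Fin 7) : ℤ :=
  tripZ 0 1 2 a b c + tripZ 0 3 4 a b c + tripZ 0 5 6 a b c + tripZ 1 3 5 a b c
    - tripZ 1 4 6 a b c - tripZ 2 3 6 a b c - tripZ 2 4 5 a b c

lemma trip_cast (i j k a b c : Fin 7) :
    trip i j k a b c = ((tripZ i j k a b c : ℤ) : ℝ) := by
  simp only [trip, tripZ, Int.cast_sub, Int.cast_add,
    apply_ite (fun x : ℤ => (x : ℝ)), Int.cast_one, Int.cast_zero]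
def phM : Fin 7 → Fin 7 → Fin 7 → ℤ
  | 0, 1, 2 => 1
  | 0, 2, 1 => -1
  | 0, 3, 4 => 1
  | 0, 4, 3 => -1
  | 0, 5, 6 => 1
  | 0, 6, 5 => -1
  | 1, 0, 2 => -1
  | 1, 2, 0 => 1
  | 1, 3, 5 => 1
  | 1, 4, 6 => -1
  | 1, 5, 3 => -1
  | 1, 6, 4 => 1
  | 2, 0, 1 => 1
  | 2, 1, 0 => -1
  | 2, 3, 6 => -1
  | 2, 4, 5 => -1
  | 2, 5, 4 => 1
  | 2, 6, 3 => 1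
  | 3, 0, 4 => -1
  | 3, 1, 5 => -1
  | 3, 2, 6 => 1
  | 3, 4, 0 => 1
  | 3, 5, 1 => 1
  | 3, 6, 2 => -1
  | 4, 0, 3 => 1
  | 4, 1, 6 => 1
  | 4, 2, 5 => 1
  | 4, 3, 0 => -1
  | 4, 5, 2 => -1
  | 4, 6, 1 => -1
  | 5, 0, 6 => -1
  | 5, 1, 3 => 1
  | 5, 2, 4 => -1
  | 5, 3, 1 => -1
  | 5, 4, 2 => 1
  | 5, 6, 0 => 1
  | 6, 0, 5 => 1
  | 6, 1, 4 => -1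
  | 6, 2, 3 => -1
  | 6, 3, 2 => 1
  | 6, 4, 1 => 1
  | 6, 5, 0 => -1
  | _, _, _ => 0

def psM : Fin 7 → Fin 7 → Fin 7 → Fin 7 → ℤ
  | 0, 1, 3, 6 => -1
  | 0, 1, 4, 5 => -1
  | 0, 1, 5, 4 => 1
  | 0, 1, 6, 3 => 1
  | 0, 2, 3, 5 => -1
  | 0, 2, 4, 6 => 1
  | 0, 2, 5, 3 => 1
  | 0, 2, 6, 4 => -1
  | 0, 3, 1, 6 => 1
  | 0, 3, 2, 5 => 1
  | 0, 3, 5, 2 => -1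
  | 0, 3, 6, 1 => -1
  | 0, 4, 1, 5 => 1
  | 0, 4, 2, 6 => -1
  | 0, 4, 5, 1 => -1
  | 0, 4, 6, 2 => 1
  | 0, 5, 1, 4 => -1
  | 0, 5, 2, 3 => -1
  | 0, 5, 3, 2 => 1
  | 0, 5, 4, 1 => 1
  | 0, 6, 1, 3 => -1
  | 0, 6, 2, 4 => 1
  | 0, 6, 3, 1 => 1
  | 0, 6, 4, 2 => -1
  | 1, 0, 3, 6 => 1
  | 1, 0, 4, 5 => 1
  | 1, 0, 5, 4 => -1
  | 1, 0, 6, 3 => -1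
  | 1, 2, 3, 4 => 1
  | 1, 2, 4, 3 => -1
  | 1, 2, 5, 6 => 1
  | 1, 2, 6, 5 => -1
  | 1, 3, 0, 6 => -1
  | 1, 3, 2, 4 => -1
  | 1, 3, 4, 2 => 1
  | 1, 3, 6, 0 => 1
  | 1, 4, 0, 5 => -1
  | 1, 4, 2, 3 => 1
  | 1, 4, 3, 2 => -1
  | 1, 4, 5, 0 => 1
  | 1, 5, 0, 4 => 1
  | 1, 5, 2, 6 => -1
  | 1, 5, 4, 0 => -1
  | 1, 5, 6, 2 => 1
  | 1, 6, 0, 3 => 1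
  | 1, 6, 2, 5 => 1
  | 1, 6, 3, 0 => -1
  | 1, 6, 5, 2 => -1
  | 2, 0, 3, 5 => 1
  | 2, 0, 4, 6 => -1
  | 2, 0, 5, 3 => -1
  | 2, 0, 6, 4 => 1
  | 2, 1, 3, 4 => -1
  | 2, 1, 4, 3 => 1
  | 2, 1, 5, 6 => -1
  | 2, 1, 6, 5 => 1
  | 2, 3, 0, 5 => -1
  | 2, 3, 1, 4 => 1
  | 2, 3, 4, 1 => -1
  | 2, 3, 5, 0 => 1
  | 2, 4, 0, 6 => 1
  | 2, 4, 1, 3 => -1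
  | 2, 4, 3, 1 => 1
  | 2, 4, 6, 0 => -1
  | 2, 5, 0, 3 => 1
  | 2, 5, 1, 6 => 1
  | 2, 5, 3, 0 => -1
  | 2, 5, 6, 1 => -1
  | 2, 6, 0, 4 => -1
  | 2, 6, 1, 5 => -1
  | 2, 6, 4, 0 => 1
  | 2, 6, 5, 1 => 1
  | 3, 0, 1, 6 => -1
  | 3, 0, 2, 5 => -1
  | 3, 0, 5, 2 => 1
  | 3, 0, 6, 1 => 1
  | 3, 1, 0, 6 => 1
  | 3, 1, 2, 4 => 1
  | 3, 1, 4, 2 => -1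
  | 3, 1, 6, 0 => -1
  | 3, 2, 0, 5 => 1
  | 3, 2, 1, 4 => -1
  | 3, 2, 4, 1 => 1
  | 3, 2, 5, 0 => -1
  | 3, 4, 1, 2 => 1
  | 3, 4, 2, 1 => -1
  | 3, 4, 5, 6 => 1
  | 3, 4, 6, 5 => -1
  | 3, 5, 0, 2 => -1
  | 3, 5, 2, 0 => 1
  | 3, 5, 4, 6 => -1
  | 3, 5, 6, 4 => 1
  | 3, 6, 0, 1 => -1
  | 3, 6, 1, 0 => 1
  | 3, 6, 4, 5 => 1
  | 3, 6, 5, 4 => -1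
  | 4, 0, 1, 5 => -1
  | 4, 0, 2, 6 => 1
  | 4, 0, 5, 1 => 1
  | 4, 0, 6, 2 => -1
  | 4, 1, 0, 5 => 1
  | 4, 1, 2, 3 => -1
  | 4, 1, 3, 2 => 1
  | 4, 1, 5, 0 => -1
  | 4, 2, 0, 6 => -1
  | 4, 2, 1, 3 => 1
  | 4, 2, 3, 1 => -1
  | 4, 2, 6, 0 => 1
  | 4, 3, 1, 2 => -1
  | 4, 3, 2, 1 => 1
  | 4, 3, 5, 6 => -1
  | 4, 3, 6, 5 => 1
  | 4, 5, 0, 1 => -1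
  | 4, 5, 1, 0 => 1
  | 4, 5, 3, 6 => 1
  | 4, 5, 6, 3 => -1
  | 4, 6, 0, 2 => 1
  | 4, 6, 2, 0 => -1
  | 4, 6, 3, 5 => -1
  | 4, 6, 5, 3 => 1
  | 5, 0, 1, 4 => 1
  | 5, 0, 2, 3 => 1
  | 5, 0, 3, 2 => -1
  | 5, 0, 4, 1 => -1
  | 5, 1, 0, 4 => -1
  | 5, 1, 2, 6 => 1
  | 5, 1, 4, 0 => 1
  | 5, 1, 6, 2 => -1
  | 5, 2, 0, 3 => -1
  | 5, 2, 1, 6 => -1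
  | 5, 2, 3, 0 => 1
  | 5, 2, 6, 1 => 1
  | 5, 3, 0, 2 => 1
  | 5, 3, 2, 0 => -1
  | 5, 3, 4, 6 => 1
  | 5, 3, 6, 4 => -1
  | 5, 4, 0, 1 => 1
  | 5, 4, 1, 0 => -1
  | 5, 4, 3, 6 => -1
  | 5, 4, 6, 3 => 1
  | 5, 6, 1, 2 => 1
  | 5, 6, 2, 1 => -1
  | 5, 6, 3, 4 => 1
  | 5, 6, 4, 3 => -1
  | 6, 0, 1, 3 => 1
  | 6, 0, 2, 4 => -1
  | 6, 0, 3, 1 => -1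
  | 6, 0, 4, 2 => 1
  | 6, 1, 0, 3 => -1
  | 6, 1, 2, 5 => -1
  | 6, 1, 3, 0 => 1
  | 6, 1, 5, 2 => 1
  | 6, 2, 0, 4 => 1
  | 6, 2, 1, 5 => 1
  | 6, 2, 4, 0 => -1
  | 6, 2, 5, 1 => -1
  | 6, 3, 0, 1 => 1
  | 6, 3, 1, 0 => -1
  | 6, 3, 4, 5 => -1
  | 6, 3, 5, 4 => 1
  | 6, 4, 0, 2 => -1
  | 6, 4, 2, 0 => 1
  | 6, 4, 3, 5 => 1
  | 6, 4, 5, 3 => -1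
  | 6, 5, 1, 2 => -1
  | 6, 5, 2, 1 => 1
  | 6, 5, 3, 4 => -1
  | 6, 5, 4, 3 => 1
  | _, _, _, _ => 0
lemma phZ_eq_phM : ∀ a b c, phZ a b c = phM a b c := by decide

lemma phi0_cast (a b c : Fin 7) : phi0 a b c = ((phM a b c : ℤ) : ℝ) := by
  rw [← phZ_eq_phM]
  simp only [phi0, phZ, trip_cast, Int.cast_sub, Int.cast_add]

lemma phi0_swap12 (a b c : Fin 7) : phi0 b a c = -phi0 a b c := by
  have : ∀ a b c, phM b a c = -phM a b c := by decide
  rw [phi0_cast, phi0_cast, this]; push_cast; ring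

lemma phi0_swap23 (a b c : Fin 7) : phi0 a c b = -phi0 a b c := by
  have : ∀ a b c, phM a c b = -phM a b c := by decide
  rw [phi0_cast, phi0_cast, this]; push_cast; ring

/-! generic collapse lemmas -/

lemma sum_trip_mul2 (G : Fin 7 → Fin 7 → ℝ) (i j k a : Fin 7) :
    (∑ m, ∑ n, trip i j k a m n * G m n) =
      (if a = i then G j k - G k j else 0) + (if a = j then G k i - G i k else 0)
        + (if a = k then G i j - G j i else 0) := by
  simp only [trip, ite_and, sub_mul, add_mul, ite_mul, one_mul, zero_mul,
    Finset.sum_sub_distrib, Finset.sum_add_distrib, Finset.sum_ite_irrel,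
    Finset.sum_ite_eq, Finset.mem_univ, if_true, Finset.sum_const_zero]
  by_cases h1 : a = i <;> by_cases h2 : a = j <;> by_cases h3 : a = k <;>
    by_cases h4 : i = j <;> by_cases h5 : i = k <;> by_cases h6 : j = k <;>
    simp_all <;> ring

lemma sum_trip_mul3 (F : Fin 7 → Fin 7 → Fin 7 → ℝ) (i j k : Fin 7) :
    (∑ r, ∑ s, ∑ t, F r s t * trip i j k r s t) =
      F i j k + F j k i + F k i j - F i k j - F k j i - F j i k := by
  simp only [trip, ite_and, mul_sub, mul_add, mul_ite, mul_one, mul_zero,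
    Finset.sum_sub_distrib, Finset.sum_add_distrib, Finset.sum_ite_irrel,
    Finset.sum_ite_eq', Finset.mem_univ, if_true, Finset.sum_const_zero]

def eps7v (v : Fin 7 → Fin 7) : ℝ :=
  if h : Function.Bijective v then
    ((Equiv.Perm.sign (Equiv.ofBijective _ h) : ℤ) : ℝ)
  else 0

lemma eps7_eq_v (a b c d e f g : Fin 7) :
    eps7 a b c d e f g = eps7v ![a, b, c, d, e, f, g] := rfl

lemma eps7v_swap (v : Fin 7 → Fin 7) (k l : Fin 7) (hkl : k ≠ l) :
    eps7v (v ∘ Equiv.swap k l) = -eps7v v := by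
  by_cases hb : Function.Bijective v
  · have hb2 : Function.Bijective (v ∘ (Equiv.swap k l : Equiv.Perm (Fin 7))) :=
      hb.comp (Equiv.swap k l).bijective
    rw [eps7v, dif_pos hb2, eps7v, dif_pos hb]
    have he : Equiv.ofBijective _ hb2 =
        (Equiv.ofBijective v hb) * (Equiv.swap k l) := Equiv.ext fun x => rfl
    rw [he, Equiv.Perm.sign_mul, Equiv.Perm.sign_swap hkl]
    push_cast; ring
  · have hb2 : ¬ Function.Bijective (v ∘ (Equiv.swap k l : Equiv.Perm (Fin 7))) := by
      intro hc
      apply hb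
      have h2 := hc.comp (Equiv.swap k l).bijective
      have hcc : (v ∘ (Equiv.swap k l : Equiv.Perm (Fin 7))) ∘
          (Equiv.swap k l : Equiv.Perm (Fin 7)) = v := by
        funext x; simp [Function.comp, Equiv.swap_apply_self]
      rwa [hcc] at h2
    rw [eps7v, dif_neg hb2, eps7v, dif_neg hb, neg_zero]

lemma vec_swap01 (a b c d e f g : Fin 7) :
    ![b, a, c, d, e, f, g] = ![a, b, c, d, e, f, g] ∘ Equiv.swap (0 : Fin 7) 1 := by
  funext x; fin_cases x <;> simp [Equiv.swap_apply_def] <;> rfl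

lemma vec_swap12 (a b c d e f g : Fin 7) :
    ![a, c, b, d, e, f, g] = ![a, b, c, d, e, f, g] ∘ Equiv.swap (1 : Fin 7) 2 := by
  funext x; fin_cases x <;> simp [Equiv.swap_apply_def] <;> rfl

lemma vec_swap23 (a b c d e f g : Fin 7) :
    ![a, b, d, c, e, f, g] = ![a, b, c, d, e, f, g] ∘ Equiv.swap (2 : Fin 7) 3 := by
  funext x; fin_cases x <;> simp [Equiv.swap_apply_def] <;> rfl

lemma vec_swap45 (a b c d e f g : Fin 7) :
    ![a, b, c, d, f, e, g] = ![a, b, c, d, e, f, g] ∘ Equiv.swap (4 : Fin 7) 5 := by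
  funext x; fin_cases x <;> simp [Equiv.swap_apply_def] <;> rfl

lemma vec_swap56 (a b c d e f g : Fin 7) :
    ![a, b, c, d, e, g, f] = ![a, b, c, d, e, f, g] ∘ Equiv.swap (5 : Fin 7) 6 := by
  funext x; fin_cases x <;> simp [Equiv.swap_apply_def] <;> rfl

lemma eps7_swap01 (a b c d e f g : Fin 7) :
    eps7 b a c d e f g = -eps7 a b c d e f g := by
  rw [eps7_eq_v, eps7_eq_v, vec_swap01, eps7v_swap _ _ _ (by decide)]

lemma eps7_swap12 (a b c d e f g : Fin 7) :
    eps7 a c b d e f g = -eps7 a b c d e f g := by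
  rw [eps7_eq_v, eps7_eq_v, vec_swap12, eps7v_swap _ _ _ (by decide)]

lemma eps7_swap23 (a b c d e f g : Fin 7) :
    eps7 a b d c e f g = -eps7 a b c d e f g := by
  rw [eps7_eq_v, eps7_eq_v, vec_swap23, eps7v_swap _ _ _ (by decide)]

lemma eps7_swap45 (a b c d e f g : Fin 7) :
    eps7 a b c d f e g = -eps7 a b c d e f g := by
  rw [eps7_eq_v, eps7_eq_v, vec_swap45, eps7v_swap _ _ _ (by decide)]

lemma eps7_swap56 (a b c d e f g : Fin 7) :
    eps7 a b c d e g f = -eps7 a b c d e f g := by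
  rw [eps7_eq_v, eps7_eq_v, vec_swap56, eps7v_swap _ _ _ (by decide)]

/-! Vandermonde evaluation of eps7 -/

def pdZ (a b c d e f g : Fin 7) : ℤ :=
  ∏ i : Fin 7, ∏ j ∈ Finset.Ioi i,
    ((((![a, b, c, d, e, f, g] j : Fin 7) : ℕ) : ℤ) - (((![a, b, c, d, e, f, g] i : Fin 7) : ℕ) : ℤ))

lemma base_prod : (∏ i : Fin 7, ∏ j ∈ Finset.Ioi i, (((j : ℕ) : ℤ) - ((i : ℕ) : ℤ)))
    = 24883200 := by decide

lemma eps7_mul (a b c d e f g : Fin 7) :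
    (24883200 : ℝ) * eps7 a b c d e f g = ((pdZ a b c d e f g : ℤ) : ℝ) := by
  set v := ![a, b, c, d, e, f, g] with hv
  by_cases hb : Function.Bijective v
  · set σ := Equiv.ofBijective v hb with hσ
    have hpd : pdZ a b c d e f g = (Equiv.Perm.sign σ : ℤ) * 24883200 := by
      have h1 : pdZ a b c d e f g =
          ((Matrix.vandermonde (fun i : Fin 7 => ((i : ℕ) : ℤ))).submatrix σ id).det := by
        rw [show (Matrix.vandermonde (fun i : Fin 7 => ((i : ℕ) : ℤ))).submatrix σ id
            = Matrix.vandermonde (fun i : Fin 7 => ((σ i : ℕ) : ℤ)) from rfl,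
          Matrix.det_vandermonde]
        rfl
      rw [h1, Matrix.det_permute, Matrix.det_vandermonde, base_prod]
      norm_cast
    rw [hpd, eps7, dif_pos (show Function.Bijective ![a,b,c,d,e,f,g] from hb)]
    push_cast
    ring
  · rw [eps7, dif_neg (show ¬ Function.Bijective ![a,b,c,d,e,f,g] from hb), mul_zero]
    have hni : ¬ Function.Injective v := fun hi => hb (Finite.injective_iff_bijective.mp hi)
    rw [Function.Injective] at hni
    push_neg at hni
    obtain ⟨x, y, hxy, hne⟩ := hni
    have hz : pdZ a b c d e f g = 0 := by
      unfold pdZ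
      rcases hne.lt_or_gt with h | h
      · apply Finset.prod_eq_zero (Finset.mem_univ x)
        apply Finset.prod_eq_zero (Finset.mem_Ioi.mpr h)
        rw [← hv, hxy, sub_self]
      · apply Finset.prod_eq_zero (Finset.mem_univ y)
        apply Finset.prod_eq_zero (Finset.mem_Ioi.mpr h)
        rw [← hv, hxy, sub_self]
    rw [hz]
    norm_num


lemma eps_trip (m n p q i j k : Fin 7) :
    (∑ r, ∑ s, ∑ t, eps7 m n p q r s t * trip i j k r s t) = 6 * eps7 m n p q i j k := by
  rw [sum_trip_mul3 (fun r s t => eps7 m n p q r s t)]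
  have c1 : eps7 m n p q j k i = eps7 m n p q i j k := by
    rw [eps7_swap56 m n p q j i k, eps7_swap45 m n p q i j k, neg_neg]
  have c2 : eps7 m n p q k i j = eps7 m n p q i j k := by
    rw [eps7_swap45 m n p q i k j, eps7_swap56 m n p q i j k, neg_neg]
  have c3 : eps7 m n p q i k j = -eps7 m n p q i j k := eps7_swap56 m n p q i j k
  have c4 : eps7 m n p q k j i = -eps7 m n p q i j k := by
    rw [eps7_swap45 m n p q j k i, c1]
  have c5 : eps7 m n p q j i k = -eps7 m n p q i j k := eps7_swap45 m n p q i j k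
  rw [c1, c2, c3, c4, c5]; ring

lemma psi0_eps (m n p q : Fin 7) : psi0 m n p q =
    eps7 m n p q 0 1 2 + eps7 m n p q 0 3 4 + eps7 m n p q 0 5 6 + eps7 m n p q 1 3 5
      - eps7 m n p q 1 4 6 - eps7 m n p q 2 3 6 - eps7 m n p q 2 4 5 := by
  have hexp : ∀ r s t : Fin 7, eps7 m n p q r s t * phi0 r s t =
      eps7 m n p q r s t * trip 0 1 2 r s t + eps7 m n p q r s t * trip 0 3 4 r s t
        + eps7 m n p q r s t * trip 0 5 6 r s t + eps7 m n p q r s t * trip 1 3 5 r s t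
        - eps7 m n p q r s t * trip 1 4 6 r s t - eps7 m n p q r s t * trip 2 3 6 r s t
        - eps7 m n p q r s t * trip 2 4 5 r s t := by
    intro r s t; rw [phi0]; ring
  rw [psi0]
  simp only [hexp, Finset.sum_add_distrib, Finset.sum_sub_distrib]
  rw [eps_trip, eps_trip, eps_trip, eps_trip, eps_trip, eps_trip, eps_trip]
  ring

lemma psi0_swap12 (m n p q : Fin 7) : psi0 n m p q = -psi0 m n p q := by
  rw [psi0_eps n m p q, psi0_eps m n p q,
    eps7_swap01 m n p q 0 1 2, eps7_swap01 m n p q 0 3 4, eps7_swap01 m n p q 0 5 6,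
    eps7_swap01 m n p q 1 3 5, eps7_swap01 m n p q 1 4 6, eps7_swap01 m n p q 2 3 6,
    eps7_swap01 m n p q 2 4 5]
  ring

lemma psi0_swap23 (m n p q : Fin 7) : psi0 m p n q = -psi0 m n p q := by
  rw [psi0_eps m p n q, psi0_eps m n p q,
    eps7_swap12 m n p q 0 1 2, eps7_swap12 m n p q 0 3 4, eps7_swap12 m n p q 0 5 6,
    eps7_swap12 m n p q 1 3 5, eps7_swap12 m n p q 1 4 6, eps7_swap12 m n p q 2 3 6,
    eps7_swap12 m n p q 2 4 5]
  ring

lemma psi0_swap34 (m n p q : Fin 7) : psi0 m n q p = -psi0 m n p q := by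
  rw [psi0_eps m n q p, psi0_eps m n p q,
    eps7_swap23 m n p q 0 1 2, eps7_swap23 m n p q 0 3 4, eps7_swap23 m n p q 0 5 6,
    eps7_swap23 m n p q 1 3 5, eps7_swap23 m n p q 1 4 6, eps7_swap23 m n p q 2 3 6,
    eps7_swap23 m n p q 2 4 5]
  ring

lemma alt3_ext (f g : Fin 7 → Fin 7 → Fin 7 → ℝ)
    (hf1 : ∀ a b c, f b a c = -f a b c) (hf2 : ∀ a b c, f a c b = -f a b c)
    (hg1 : ∀ a b c, g b a c = -g a b c) (hg2 : ∀ a b c, g a c b = -g a b c)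
    (hs : ∀ a b c, a < b → b < c → f a b c = g a b c) :
    ∀ a b c, f a b c = g a b c := by
  intro a b c
  rcases lt_trichotomy a b with hab | rfl | hab
  · rcases lt_trichotomy b c with hbc | rfl | hbc
    · exact hs a b c hab hbc
    · linarith [hf2 a b b, hg2 a b b]
    · rcases lt_trichotomy a c with hac | rfl | hac
      · linarith [hf2 a b c, hg2 a b c, hs a c b hac hbc]
      · linarith [hf2 a a b, hf1 a a b, hg2 a a b, hg1 a a b]
      · linarith [hf2 a b c, hf1 a c b, hg2 a b c, hg1 a c b, hs c a b hac hab]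
  · linarith [hf1 a a c, hg1 a a c]
  · rcases lt_trichotomy a c with hac | rfl | hac
    · linarith [hf1 a b c, hg1 a b c, hs b a c hab hac]
    · linarith [hf2 a a b, hf1 a a b, hg2 a a b, hg1 a a b]
    · rcases lt_trichotomy b c with hbc | rfl | hbc
      · linarith [hf1 a b c, hf2 b a c, hg1 a b c, hg2 b a c, hs b c a hbc hac]
      · linarith [hf2 a b b, hg2 a b b]
      · linarith [hf2 a b c, hf1 a c b, hf2 c a b, hg2 a b c, hg1 a c b, hg2 c a b,
          hs c b a hbc hab]

lemma psM_swap12 : ∀ m n p q, psM n m p q = -psM m n p q := by decide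
lemma psM_swap23 : ∀ m n p q, psM m p n q = -psM m n p q := by decide

lemma psTabSorted : ∀ m n p q : Fin 7, m < n → n < p →
    psi0 m n p q = ((psM m n p q : ℤ) : ℝ) := by
  have key : ∀ m n p q : Fin 7, m < n → n < p →
      pdZ m n p q 0 1 2 + pdZ m n p q 0 3 4 + pdZ m n p q 0 5 6 + pdZ m n p q 1 3 5
        - pdZ m n p q 1 4 6 - pdZ m n p q 2 3 6 - pdZ m n p q 2 4 5
        = 24883200 * psM m n p q := by decide
  intro m n p q h1 h2
  have hZ : (24883200 : ℝ) ≠ 0 := by norm_num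
  apply mul_left_cancel₀ hZ
  rw [psi0_eps]
  have expand : (24883200 : ℝ) * (eps7 m n p q 0 1 2 + eps7 m n p q 0 3 4
      + eps7 m n p q 0 5 6 + eps7 m n p q 1 3 5 - eps7 m n p q 1 4 6
      - eps7 m n p q 2 3 6 - eps7 m n p q 2 4 5)
      = (24883200 : ℝ) * eps7 m n p q 0 1 2 + (24883200 : ℝ) * eps7 m n p q 0 3 4
        + (24883200 : ℝ) * eps7 m n p q 0 5 6 + (24883200 : ℝ) * eps7 m n p q 1 3 5
        - (24883200 : ℝ) * eps7 m n p q 1 4 6 - (24883200 : ℝ) * eps7 m n p q 2 3 6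
        - (24883200 : ℝ) * eps7 m n p q 2 4 5 := by ring
  rw [expand, eps7_mul, eps7_mul, eps7_mul, eps7_mul, eps7_mul, eps7_mul, eps7_mul,
    ← Int.cast_add, ← Int.cast_add, ← Int.cast_add, ← Int.cast_sub, ← Int.cast_sub,
    ← Int.cast_sub, key m n p q h1 h2]
  push_cast
  ring

lemma psi0_cast : ∀ m n p q : Fin 7, psi0 m n p q = ((psM m n p q : ℤ) : ℝ) := by
  intro m n p q₀
  refine alt3_ext (fun m n p => psi0 m n p q₀) (fun m n p => ((psM m n p q₀ : ℤ) : ℝ))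
    (fun a b c => psi0_swap12 a b c q₀) (fun a b c => psi0_swap23 a b c q₀)
    (fun a b c => show ((psM b a c q₀ : ℤ) : ℝ) = -((psM a b c q₀ : ℤ) : ℝ) by
      rw [psM_swap12 a b c q₀, Int.cast_neg])
    (fun a b c => show ((psM a c b q₀ : ℤ) : ℝ) = -((psM a b c q₀ : ℤ) : ℝ) by
      rw [psM_swap23 a b c q₀, Int.cast_neg])
    (fun a b c h1 h2 => psTabSorted a b c q₀ h1 h2) m n p


def kdZ (a b : Fin 7) : ℤ := if a = b then 1 else 0

lemma kd_cast (a b : Fin 7) : kd a b = ((kdZ a b : ℤ) : ℝ) := by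
  simp only [kd, kdZ, apply_ite (fun x : ℤ => (x : ℝ)), Int.cast_one, Int.cast_zero]

/-! sum shuffling helpers -/

lemma pull3 (F : Fin 7 → Fin 7 → Fin 7 → ℝ) :
    (∑ a, ∑ b, ∑ c, F a b c) = ∑ c, ∑ a, ∑ b, F a b c := by
  rw [show (∑ a, ∑ b, ∑ c, F a b c) = ∑ a, ∑ c, ∑ b, F a b c from
    Finset.sum_congr rfl fun a _ => Finset.sum_comm]
  exact Finset.sum_comm

lemma pull4 (F : Fin 7 → Fin 7 → Fin 7 → Fin 7 → ℝ) :
    (∑ a, ∑ b, ∑ c, ∑ d, F a b c d) = ∑ d, ∑ a, ∑ b, ∑ c, F a b c d := by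
  rw [show (∑ a, ∑ b, ∑ c, ∑ d, F a b c d) = ∑ a, ∑ d, ∑ b, ∑ c, F a b c d from
    Finset.sum_congr rfl fun a _ => pull3 _]
  exact Finset.sum_comm

lemma pull5 (F : Fin 7 → Fin 7 → Fin 7 → Fin 7 → Fin 7 → ℝ) :
    (∑ a, ∑ b, ∑ c, ∑ d, ∑ e, F a b c d e) = ∑ e, ∑ a, ∑ b, ∑ c, ∑ d, F a b c d e := by
  rw [show (∑ a, ∑ b, ∑ c, ∑ d, ∑ e, F a b c d e) = ∑ a, ∑ e, ∑ b, ∑ c, ∑ d, F a b c d e from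
    Finset.sum_congr rfl fun a _ => pull4 _]
  exact Finset.sum_comm

lemma kd_collapse (a : Fin 7) (f : Fin 7 → ℝ) : (∑ d, f d * kd d a) = f a := by
  simp [kd, Finset.sum_ite_eq']

/-! contraction identities (forward direction) -/

lemma A1R (a d : Fin 7) : (∑ b, ∑ c, phi0 d b c * phi0 a b c) = 6 * kd d a := by
  have key : ∀ a d : Fin 7, (∑ b, ∑ c, phM d b c * phM a b c) = 6 * kdZ d a := by decide
  simp only [phi0_cast, kd_cast]
  exact_mod_cast key a d

lemma A2R (b d : Fin 7) : (∑ a, ∑ c, phi0 a d c * phi0 a b c) = 6 * kd d b := by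
  have key : ∀ b d : Fin 7, (∑ a, ∑ c, phM a d c * phM a b c) = 6 * kdZ d b := by decide
  simp only [phi0_cast, kd_cast]
  exact_mod_cast key b d

lemma A3R (c d : Fin 7) : (∑ a, ∑ b, phi0 a b d * phi0 a b c) = 6 * kd d c := by
  have key : ∀ c d : Fin 7, (∑ a, ∑ b, phM a b d * phM a b c) = 6 * kdZ d c := by decide
  simp only [phi0_cast, kd_cast]
  exact_mod_cast key c d

lemma D1R (d m a : Fin 7) : (∑ n, ∑ p, phi0 d n p * psi0 m n p a) = 4 * phi0 d m a := by
  have key : ∀ d m a : Fin 7, (∑ n, ∑ p, phM d n p * psM m n p a) = 4 * phM d m a := by decide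
  simp only [phi0_cast, psi0_cast]
  exact_mod_cast key d m a

lemma D2R (d n a : Fin 7) : (∑ m, ∑ p, phi0 m d p * psi0 m n p a) = 4 * phi0 d n a := by
  have key : ∀ d n a : Fin 7, (∑ m, ∑ p, phM m d p * psM m n p a) = 4 * phM d n a := by decide
  simp only [phi0_cast, psi0_cast]
  exact_mod_cast key d n a

lemma D3R (d p a : Fin 7) : (∑ m, ∑ n, phi0 m n d * psi0 m n p a) = 4 * phi0 d p a := by
  have key : ∀ d p a : Fin 7, (∑ m, ∑ n, phM m n d * psM m n p a) = 4 * phM d p a := by decide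
  simp only [phi0_cast, psi0_cast]
  exact_mod_cast key d p a

/-! symmetric × antisymmetric vanishing -/

lemma symasym (h : Matrix (Fin 7) (Fin 7) ℝ) (hsym : ∀ x y, h x y = h y x) (a : Fin 7) :
    (∑ x, ∑ d, h x d * phi0 d x a) = 0 := by
  have h1 : (∑ x, ∑ d, h x d * phi0 d x a) = ∑ x, ∑ d, -(h x d * phi0 d x a) := by
    calc (∑ x, ∑ d, h x d * phi0 d x a) = ∑ d, ∑ x, h x d * phi0 d x a := Finset.sum_comm
    _ = ∑ x, ∑ d, h d x * phi0 x d a := rfl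
    _ = ∑ x, ∑ d, -(h x d * phi0 d x a) := by
        refine Finset.sum_congr rfl fun x _ => Finset.sum_congr rfl fun d _ => ?_
        rw [hsym d x, phi0_swap12]
        ring
  have h3 : (∑ x, ∑ d, -(h x d * phi0 d x a)) = -(∑ x, ∑ d, h x d * phi0 d x a) := by
    simp only [Finset.sum_neg_distrib]
  linarith [h1, h3]


lemma inner_collapse (h : Matrix (Fin 7) (Fin 7) ℝ) (r : ℝ) (x : Fin 7) :
    (∑ d, h x d * (r * kd d x)) = r * h x x := by
  calc (∑ d, h x d * (r * kd d x)) = ∑ d, (h x d * r) * kd d x :=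
        Finset.sum_congr rfl fun d _ => by ring
  _ = h x x * r := kd_collapse x _
  _ = r * h x x := by ring

lemma forward1 (h : Matrix (Fin 7) (Fin 7) ℝ) (htr : (∑ x, h x x) = 0) :
    (∑ a, ∑ b, ∑ c, iphi h a b c * phi0 a b c) = 0 := by
  have e1 : ∀ a b c, iphi h a b c * phi0 a b c
      = (1/3 : ℝ) * ∑ d, (h a d * (phi0 d b c * phi0 a b c) + h b d * (phi0 a d c * phi0 a b c)
          + h c d * (phi0 a b d * phi0 a b c)) := by
    intro a b c
    rw [iphi, mul_assoc, Finset.sum_mul]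
    exact congrArg _ (Finset.sum_congr rfl fun d _ => by ring)
  simp only [e1]
  simp only [← Finset.mul_sum, Finset.sum_add_distrib]
  have hS1 : (∑ a, ∑ b, ∑ c, ∑ d, h a d * (phi0 d b c * phi0 a b c)) = 6 * ∑ x, h x x := by
    rw [Finset.sum_congr rfl fun a _ => pull3 (fun b c d => h a d * (phi0 d b c * phi0 a b c))]
    simp only [← Finset.mul_sum, A1R]
    simp only [inner_collapse]
    rw [Finset.mul_sum]
  have hS2 : (∑ a, ∑ b, ∑ c, ∑ d, h b d * (phi0 a d c * phi0 a b c)) = 6 * ∑ x, h x x := by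
    rw [Finset.sum_congr rfl fun a _ => Finset.sum_congr rfl fun b _ =>
      (Finset.sum_comm : (∑ c, ∑ d, h b d * (phi0 a d c * phi0 a b c)) = _)]
    rw [pull3 (fun a b d => ∑ c, h b d * (phi0 a d c * phi0 a b c)),
      pull3 (fun d a b => ∑ c, h b d * (phi0 a d c * phi0 a b c))]
    simp only [← Finset.mul_sum]
    rw [Finset.sum_congr rfl fun b _ => Finset.sum_congr rfl fun d _ =>
      congrArg (h b d * ·) (A2R b d)]
    simp only [inner_collapse]
    rw [Finset.mul_sum]
  have hS3 : (∑ a, ∑ b, ∑ c, ∑ d, h c d * (phi0 a b d * phi0 a b c)) = 6 * ∑ x, h x x := by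
    rw [pull4 (fun a b c d => h c d * (phi0 a b d * phi0 a b c)),
      pull4 (fun d a b c => h c d * (phi0 a b d * phi0 a b c))]
    simp only [← Finset.mul_sum]
    rw [Finset.sum_congr rfl fun c _ => Finset.sum_congr rfl fun d _ =>
      congrArg (h c d * ·) (A3R c d)]
    simp only [inner_collapse]
    rw [Finset.mul_sum]
  rw [hS1, hS2, hS3, htr]
  ring

lemma forward2 (h : Matrix (Fin 7) (Fin 7) ℝ) (hsym : ∀ x y, h x y = h y x) (a : Fin 7) :
    (∑ m, ∑ n, ∑ p, iphi h m n p * psi0 m n p a) = 0 := by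
  have e1 : ∀ m n p, iphi h m n p * psi0 m n p a
      = (1/3 : ℝ) * ∑ d, (h m d * (phi0 d n p * psi0 m n p a)
          + h n d * (phi0 m d p * psi0 m n p a) + h p d * (phi0 m n d * psi0 m n p a)) := by
    intro m n p
    rw [iphi, mul_assoc, Finset.sum_mul]
    exact congrArg _ (Finset.sum_congr rfl fun d _ => by ring)
  simp only [e1]
  simp only [← Finset.mul_sum, Finset.sum_add_distrib]
  have hS1 : (∑ m, ∑ n, ∑ p, ∑ d, h m d * (phi0 d n p * psi0 m n p a)) = 0 := by
    rw [Finset.sum_congr rfl fun m _ => pull3 (fun n p d => h m d * (phi0 d n p * psi0 m n p a))]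
    simp only [← Finset.mul_sum]
    rw [Finset.sum_congr rfl fun m _ => Finset.sum_congr rfl fun d _ =>
      congrArg (h m d * ·) (D1R d m a)]
    have : ∀ m d : Fin 7, h m d * (4 * phi0 d m a) = 4 * (h m d * phi0 d m a) :=
      fun m d => by ring
    simp only [this, ← Finset.mul_sum]
    rw [symasym h hsym a, mul_zero]
  have hS2 : (∑ m, ∑ n, ∑ p, ∑ d, h n d * (phi0 m d p * psi0 m n p a)) = 0 := by
    rw [Finset.sum_congr rfl fun m _ => Finset.sum_congr rfl fun n _ =>
      (Finset.sum_comm : (∑ p, ∑ d, h n d * (phi0 m d p * psi0 m n p a)) = _)]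
    rw [pull3 (fun m n d => ∑ p, h n d * (phi0 m d p * psi0 m n p a)),
      pull3 (fun d m n => ∑ p, h n d * (phi0 m d p * psi0 m n p a))]
    simp only [← Finset.mul_sum]
    rw [Finset.sum_congr rfl fun n _ => Finset.sum_congr rfl fun d _ =>
      congrArg (h n d * ·) (D2R d n a)]
    have : ∀ n d : Fin 7, h n d * (4 * phi0 d n a) = 4 * (h n d * phi0 d n a) :=
      fun n d => by ring
    simp only [this, ← Finset.mul_sum]
    rw [symasym h hsym a, mul_zero]
  have hS3 : (∑ m, ∑ n, ∑ p, ∑ d, h p d * (phi0 m n d * psi0 m n p a)) = 0 := by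
    rw [pull4 (fun m n p d => h p d * (phi0 m n d * psi0 m n p a)),
      pull4 (fun d m n p => h p d * (phi0 m n d * psi0 m n p a))]
    simp only [← Finset.mul_sum]
    rw [Finset.sum_congr rfl fun p _ => Finset.sum_congr rfl fun d _ =>
      congrArg (h p d * ·) (D3R d p a)]
    have : ∀ p d : Fin 7, h p d * (4 * phi0 d p a) = 4 * (h p d * phi0 d p a) :=
      fun p d => by ring
    simp only [this, ← Finset.mul_sum]
    rw [symasym h hsym a, mul_zero]
  rw [hS1, hS2, hS3]
  ring


lemma DEC (χ : Fin 7 → Fin 7 → Fin 7 → ℝ)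
    (hχ₁ : ∀ a b c, χ a b c = -χ b a c) (hχ₂ : ∀ a b c, χ a b c = -χ a c b) :
    ∀ a b c, χ a b c = (1/6 : ℝ) * ∑ i, ∑ j, ∑ k, χ i j k * trip i j k a b c := by
  intro a b c
  have col : (∑ i, ∑ j, ∑ k, χ i j k * trip i j k a b c)
      = χ a b c + χ c a b + χ b c a - χ a c b - χ c b a - χ b a c := by
    simp only [trip, ite_and, mul_add, mul_sub, mul_ite, mul_one, mul_zero,
      Finset.sum_add_distrib, Finset.sum_sub_distrib, Finset.sum_ite_irrel,
      Finset.sum_ite_eq, Finset.mem_univ, if_true, Finset.sum_const_zero]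
  rw [col]
  linarith [hχ₁ a b c, hχ₂ a b c, hχ₁ c a b, hχ₂ c a b, hχ₁ b c a, hχ₂ b c a,
    hχ₁ a c b, hχ₂ a c b, hχ₁ c b a, hχ₂ c b a, hχ₁ b a c, hχ₂ b a c]

def HC2R (i j k x d : Fin 7) : ℝ :=
  (if x = i then phi0 d j k - phi0 d k j else 0)
    + (if x = j then phi0 d k i - phi0 d i k else 0)
    + (if x = k then phi0 d i j - phi0 d j i else 0)

def hZ2 (i j k x d : Fin 7) : ℤ :=
  (if x = i then phM d j k - phM d k j else 0)
    + (if x = j then phM d k i - phM d i k else 0)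
    + (if x = k then phM d i j - phM d j i else 0)

lemma HC2R_cast (i j k x d : Fin 7) : HC2R i j k x d = ((hZ2 i j k x d : ℤ) : ℝ) := by
  simp only [HC2R, hZ2, phi0_cast, apply_ite (fun z : ℤ => (z : ℝ)), Int.cast_add,
    Int.cast_sub, Int.cast_zero]

lemma HC2R_swap12 (i j k x d : Fin 7) : HC2R j i k x d = -HC2R i j k x d := by
  unfold HC2R
  split_ifs <;> ring

lemma HC2R_swap23 (i j k x d : Fin 7) : HC2R i k j x d = -HC2R i j k x d := by
  unfold HC2R
  split_ifs <;> ring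

lemma hdecomp (χ : Fin 7 → Fin 7 → Fin 7 → ℝ)
    (hχ₁ : ∀ a b c, χ a b c = -χ b a c) (hχ₂ : ∀ a b c, χ a b c = -χ a c b) (x d : Fin 7) :
    (∑ m, ∑ n, χ x m n * phi0 d m n)
      = (1/6 : ℝ) * ∑ i, ∑ j, ∑ k, χ i j k * HC2R i j k x d := by
  rw [Finset.sum_congr rfl fun m _ => Finset.sum_congr rfl fun n _ =>
    congrArg (· * phi0 d m n) (DEC χ hχ₁ hχ₂ x m n)]
  have e1 : ∀ m n : Fin 7, ((1/6 : ℝ) * ∑ i, ∑ j, ∑ k, χ i j k * trip i j k x m n) * phi0 d m n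
      = (1/6 : ℝ) * ∑ i, ∑ j, ∑ k, χ i j k * (trip i j k x m n * phi0 d m n) := by
    intro m n
    rw [mul_assoc, Finset.sum_mul]
    refine congrArg _ (Finset.sum_congr rfl fun i _ => ?_)
    rw [Finset.sum_mul]
    refine Finset.sum_congr rfl fun j _ => ?_
    rw [Finset.sum_mul]
    exact Finset.sum_congr rfl fun k _ => by ring
  simp only [e1, ← Finset.mul_sum]
  refine congrArg _ ?_
  rw [pull5 (fun m n i j k => χ i j k * (trip i j k x m n * phi0 d m n))]
  rw [pull5 (fun k m n i j => χ i j k * (trip i j k x m n * phi0 d m n))]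
  rw [pull5 (fun j k m n i => χ i j k * (trip i j k x m n * phi0 d m n))]
  refine Finset.sum_congr rfl fun i _ => Finset.sum_congr rfl fun j _ =>
    Finset.sum_congr rfl fun k _ => ?_
  simp only [← Finset.mul_sum]
  rw [sum_trip_mul2 (fun m n => phi0 d m n) i j k x]
  rfl


def S3L : List (Fin 7 × Fin 7 × Fin 7) := [(0, 1, 2), (0, 1, 3), (0, 1, 4), (0, 1, 5), (0, 1, 6), (0, 2, 3), (0, 2, 4), (0, 2, 5), (0, 2, 6), (0, 3, 4), (0, 3, 5), (0, 3, 6), (0, 4, 5), (0, 4, 6), (0, 5, 6), (1, 2, 3), (1, 2, 4), (1, 2, 5), (1, 2, 6), (1, 3, 4), (1, 3, 5), (1, 3, 6), (1, 4, 5), (1, 4, 6), (1, 5, 6), (2, 3, 4), (2, 3, 5), (2, 3, 6), (2, 4, 5), (2, 4, 6), (2, 5, 6), (3, 4, 5), (3, 4, 6), (3, 5, 6), (4, 5, 6)]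

lemma mem3 : ∀ i j k : Fin 7, i < j → j < k → (i, j, k) ∈ S3L := by decide

lemma trip_swapIJ (i j k a b c : Fin 7) : trip j i k a b c = -trip i j k a b c := by
  simp only [trip]; ring

lemma trip_swapJK (i j k a b c : Fin 7) : trip i k j a b c = -trip i j k a b c := by
  simp only [trip]; ring

lemma trip_swapAB (i j k a b c : Fin 7) : trip i j k b a c = -trip i j k a b c := by
  simp only [trip, and_left_comm, and_comm]; ring

lemma trip_swapBC (i j k a b c : Fin 7) : trip i j k a c b = -trip i j k a b c := by
  simp only [trip, and_left_comm, and_comm]; ring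

lemma psiphi_swap12 (i j k a b : Fin 7) :
    (∑ e, psi0 j i k e * phi0 e a b) = -∑ e, psi0 i j k e * phi0 e a b := by
  rw [← Finset.sum_neg_distrib]
  exact Finset.sum_congr rfl fun e _ => by rw [psi0_swap12]; ring

lemma psiphi_swap23 (i j k a b : Fin 7) :
    (∑ e, psi0 i k j e * phi0 e a b) = -∑ e, psi0 i j k e * phi0 e a b := by
  rw [← Finset.sum_neg_distrib]
  exact Finset.sum_congr rfl fun e _ => by rw [psi0_swap23]; ring

lemma ISymZkey : ∀ t ∈ S3L, ∀ a b : Fin 7,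
    hZ2 t.1 t.2.1 t.2.2 a b - hZ2 t.1 t.2.1 t.2.2 b a
      + 2 * (∑ e, psM t.1 t.2.1 t.2.2 e * phM e a b) = 0 := by decide

lemma ISymSorted (i j k : Fin 7) (h1 : i < j) (h2 : j < k) (a b : Fin 7) :
    HC2R i j k a b - HC2R i j k b a + 2 * (∑ e, psi0 i j k e * phi0 e a b) = 0 := by
  have key := ISymZkey (i, j, k) (mem3 i j k h1 h2) a b
  simp only [HC2R_cast, psi0_cast, phi0_cast]
  exact_mod_cast key

lemma ISymR (a b : Fin 7) : ∀ i j k : Fin 7,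
    HC2R i j k a b - HC2R i j k b a + 2 * (∑ e, psi0 i j k e * phi0 e a b) = 0 := by
  have hz : ∀ (x y z : Fin 7), (0:ℝ) = -0 := fun _ _ _ => by ring
  refine alt3_ext _ (fun _ _ _ => (0:ℝ)) ?_ ?_ (fun x y z => (neg_zero).symm)
    (fun x y z => (neg_zero).symm) ?_
  · intro x y z
    rw [HC2R_swap12 x y z a b, HC2R_swap12 x y z b a, psiphi_swap12 x y z a b]
    ring
  · intro x y z
    rw [HC2R_swap23 x y z a b, HC2R_swap23 x y z b a, psiphi_swap23 x y z a b]
    ring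
  · exact fun x y z hxy hyz => ISymSorted x y z hxy hyz a b


lemma psipsi_swapIJ (i j k a b c : Fin 7) :
    (∑ e, psi0 j i k e * psi0 e a b c) = -∑ e, psi0 i j k e * psi0 e a b c := by
  rw [← Finset.sum_neg_distrib]
  exact Finset.sum_congr rfl fun e _ => by rw [psi0_swap12]; ring

lemma psipsi_swapJK (i j k a b c : Fin 7) :
    (∑ e, psi0 i k j e * psi0 e a b c) = -∑ e, psi0 i j k e * psi0 e a b c := by
  rw [← Finset.sum_neg_distrib]
  exact Finset.sum_congr rfl fun e _ => by rw [psi0_swap23]; ring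

lemma psipsi_swapAB (i j k a b c : Fin 7) :
    (∑ e, psi0 i j k e * psi0 e b a c) = -∑ e, psi0 i j k e * psi0 e a b c := by
  rw [← Finset.sum_neg_distrib]
  exact Finset.sum_congr rfl fun e _ => by rw [psi0_swap23 e a b c]; ring

lemma psipsi_swapBC (i j k a b c : Fin 7) :
    (∑ e, psi0 i j k e * psi0 e a c b) = -∑ e, psi0 i j k e * psi0 e a b c := by
  rw [← Finset.sum_neg_distrib]
  exact Finset.sum_congr rfl fun e _ => by rw [psi0_swap34 e a b c]; ring

def FimD (i j k a b c : Fin 7) : ℝ :=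
  ∑ d, (HC2R i j k a d * phi0 d b c + HC2R i j k b d * phi0 a d c
    + HC2R i j k c d * phi0 a b d)

def Fim (i j k a b c : Fin 7) : ℝ :=
  FimD i j k a b c - 4 * trip i j k a b c - 2 * (phi0 i j k * phi0 a b c)
    + 2 * ∑ e, psi0 i j k e * psi0 e a b c

lemma FimD_swapAB (i j k x y z : Fin 7) : FimD i j k y x z = -FimD i j k x y z := by
  rw [FimD, FimD, ← Finset.sum_neg_distrib]
  refine Finset.sum_congr rfl fun d _ => ?_
  rw [phi0_swap12 x d z, phi0_swap12 d y z, phi0_swap12 x y d]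
  ring

lemma FimD_swapBC (i j k x y z : Fin 7) : FimD i j k x z y = -FimD i j k x y z := by
  rw [FimD, FimD, ← Finset.sum_neg_distrib]
  refine Finset.sum_congr rfl fun d _ => ?_
  rw [phi0_swap23 d y z, phi0_swap23 x d z, phi0_swap23 x y d]
  ring

lemma FimD_swapIJ (i j k x y z : Fin 7) : FimD j i k x y z = -FimD i j k x y z := by
  rw [FimD, FimD, ← Finset.sum_neg_distrib]
  refine Finset.sum_congr rfl fun d _ => ?_
  rw [HC2R_swap12 i j k x d, HC2R_swap12 i j k y d, HC2R_swap12 i j k z d]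
  ring

lemma FimD_swapJK (i j k x y z : Fin 7) : FimD i k j x y z = -FimD i j k x y z := by
  rw [FimD, FimD, ← Finset.sum_neg_distrib]
  refine Finset.sum_congr rfl fun d _ => ?_
  rw [HC2R_swap23 i j k x d, HC2R_swap23 i j k y d, HC2R_swap23 i j k z d]
  ring

lemma IMZkey : ∀ t ∈ S3L, ∀ u ∈ S3L,
    (∑ d, (hZ2 t.1 t.2.1 t.2.2 u.1 d * phM d u.2.1 u.2.2
        + hZ2 t.1 t.2.1 t.2.2 u.2.1 d * phM u.1 d u.2.2
        + hZ2 t.1 t.2.1 t.2.2 u.2.2 d * phM u.1 u.2.1 d))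
      - 4 * tripZ t.1 t.2.1 t.2.2 u.1 u.2.1 u.2.2
      - 2 * (phM t.1 t.2.1 t.2.2 * phM u.1 u.2.1 u.2.2)
      + 2 * ∑ e, psM t.1 t.2.1 t.2.2 e * psM e u.1 u.2.1 u.2.2 = 0 := by decide

lemma IMSorted (i j k : Fin 7) (h1 : i < j) (h2 : j < k) (a b c : Fin 7)
    (h3 : a < b) (h4 : b < c) : Fim i j k a b c = 0 := by
  have key := IMZkey (i, j, k) (mem3 i j k h1 h2) (a, b, c) (mem3 a b c h3 h4)
  rw [Fim, FimD]
  simp only [HC2R_cast, psi0_cast, phi0_cast, trip_cast]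
  exact_mod_cast key

lemma IMSorted1 (i j k : Fin 7) (h1 : i < j) (h2 : j < k) :
    ∀ a b c : Fin 7, Fim i j k a b c = 0 := by
  refine alt3_ext _ (fun _ _ _ => (0:ℝ)) ?_ ?_ (fun x y z => (neg_zero).symm)
    (fun x y z => (neg_zero).symm) ?_
  · intro x y z
    rw [Fim, Fim, FimD_swapAB, trip_swapAB, phi0_swap12 x y z, psipsi_swapAB]
    ring
  · intro x y z
    rw [Fim, Fim, FimD_swapBC, trip_swapBC, phi0_swap23 x y z, psipsi_swapBC]
    ring
  · exact fun x y z hxy hyz => IMSorted i j k h1 h2 x y z hxy hyz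

lemma IMR (a b c : Fin 7) : ∀ i j k : Fin 7, Fim i j k a b c = 0 := by
  refine alt3_ext (fun i j k => Fim i j k a b c) (fun _ _ _ => (0:ℝ)) ?_ ?_
    (fun x y z => (neg_zero).symm) (fun x y z => (neg_zero).symm) ?_
  · intro x y z
    show Fim y x z a b c = -Fim x y z a b c
    rw [Fim, Fim, FimD_swapIJ, trip_swapIJ, phi0_swap12 x y z, psipsi_swapIJ]
    ring
  · intro x y z
    show Fim x z y a b c = -Fim x y z a b c
    rw [Fim, Fim, FimD_swapJK, trip_swapJK, phi0_swap23 x y z, psipsi_swapJK]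
    ring
  · exact fun x y z hxy hyz => IMSorted1 x y z hxy hyz a b c


lemma contractV (χ : Fin 7 → Fin 7 → Fin 7 → ℝ) (W : Fin 7 → ℝ) :
    (∑ e, (∑ m, ∑ n, ∑ p, χ m n p * psi0 m n p e) * W e)
      = ∑ i, ∑ j, ∑ k, χ i j k * (∑ e, psi0 i j k e * W e) := by
  have e1 : ∀ e, (∑ m, ∑ n, ∑ p, χ m n p * psi0 m n p e) * W e
      = ∑ m, ∑ n, ∑ p, χ m n p * (psi0 m n p e * W e) := by
    intro e
    simp only [Finset.sum_mul]
    exact Finset.sum_congr rfl fun m _ => Finset.sum_congr rfl fun n _ =>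
      Finset.sum_congr rfl fun p _ => by ring
  simp only [e1]
  rw [← pull4 (fun m n p e => χ m n p * (psi0 m n p e * W e))]
  simp only [← Finset.mul_sum]

lemma reverseMain (χ : Fin 7 → Fin 7 → Fin 7 → ℝ)
    (hχ₁ : ∀ a b c, χ a b c = -χ b a c) (hχ₂ : ∀ a b c, χ a b c = -χ a c b)
    (hS : (∑ a, ∑ b, ∑ c, χ a b c * phi0 a b c) = 0)
    (hV : ∀ e, (∑ m, ∑ n, ∑ p, χ m n p * psi0 m n p e) = 0) :
    ∃ h : Matrix (Fin 7) (Fin 7) ℝ, h.transpose = h ∧ h.trace = 0 ∧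
      ∀ a b c, χ a b c = iphi h a b c := by
  set hm : Matrix (Fin 7) (Fin 7) ℝ :=
    Matrix.of (fun x d : Fin 7 => (3/4 : ℝ) * ∑ m, ∑ n, χ x m n * phi0 d m n) with hmdef
  have hme : ∀ x d, hm x d = (1/8 : ℝ) * ∑ i, ∑ j, ∑ k, χ i j k * HC2R i j k x d := by
    intro x d
    show (3/4 : ℝ) * (∑ m, ∑ n, χ x m n * phi0 d m n) = _
    rw [hdecomp χ hχ₁ hχ₂ x d]
    ring
  refine ⟨hm, ?_, ?_, ?_⟩
  · -- symmetry
    ext x y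
    rw [Matrix.transpose_apply]
    have key : ∀ i j k : Fin 7, χ i j k * HC2R i j k x y - χ i j k * HC2R i j k y x
        = -2 * (χ i j k * (∑ e, psi0 i j k e * phi0 e x y)) := by
      intro i j k
      have h0 := ISymR x y i j k
      have h1 : HC2R i j k x y - HC2R i j k y x = -2 * (∑ e, psi0 i j k e * phi0 e x y) := by
        linarith
      calc χ i j k * HC2R i j k x y - χ i j k * HC2R i j k y x
          = χ i j k * (HC2R i j k x y - HC2R i j k y x) := by ring
        _ = -2 * (χ i j k * (∑ e, psi0 i j k e * phi0 e x y)) := by rw [h1]; ring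
    have hdiff : hm x y - hm y x = 0 := by
      rw [hme x y, hme y x, ← mul_sub, ← Finset.sum_sub_distrib]
      simp only [← Finset.sum_sub_distrib]
      simp only [key]
      simp only [← Finset.mul_sum]
      rw [← contractV χ (fun e => phi0 e x y)]
      rw [Finset.sum_congr rfl fun e _ => by rw [hV e, zero_mul]]
      simp
    linarith [hdiff]
  · -- trace
    show (∑ x, hm x x) = 0
    have : ∀ x : Fin 7, hm x x = (3/4 : ℝ) * ∑ m, ∑ n, χ x m n * phi0 x m n := fun x => rfl
    simp only [this, ← Finset.mul_sum]
    rw [hS, mul_zero]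
  · -- iphi
    intro a b c
    have tform : ∀ d : Fin 7, hm a d * phi0 d b c + hm b d * phi0 a d c + hm c d * phi0 a b d
        = (1/8 : ℝ) * ∑ i, ∑ j, ∑ k, χ i j k * (HC2R i j k a d * phi0 d b c
            + HC2R i j k b d * phi0 a d c + HC2R i j k c d * phi0 a b d) := by
      intro d
      rw [hme a d, hme b d, hme c d, mul_assoc, mul_assoc, mul_assoc, ← mul_add, ← mul_add]
      refine congrArg _ ?_
      simp only [Finset.sum_mul, ← Finset.sum_add_distrib]
      exact Finset.sum_congr rfl fun i _ => Finset.sum_congr rfl fun j _ =>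
        Finset.sum_congr rfl fun k _ => by ring
    rw [iphi]
    simp only [tform, ← Finset.mul_sum]
    rw [pull4 (fun d i j k => χ i j k * (HC2R i j k a d * phi0 d b c
        + HC2R i j k b d * phi0 a d c + HC2R i j k c d * phi0 a b d)),
      pull4 (fun k d i j => χ i j k * (HC2R i j k a d * phi0 d b c
        + HC2R i j k b d * phi0 a d c + HC2R i j k c d * phi0 a b d)),
      pull4 (fun j k d i => χ i j k * (HC2R i j k a d * phi0 d b c
        + HC2R i j k b d * phi0 a d c + HC2R i j k c d * phi0 a b d))]
    simp only [← Finset.mul_sum]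
    have imr : ∀ i j k : Fin 7, χ i j k * (∑ d, (HC2R i j k a d * phi0 d b c
        + HC2R i j k b d * phi0 a d c + HC2R i j k c d * phi0 a b d))
        = 4 * (χ i j k * trip i j k a b c) + 2 * (χ i j k * phi0 i j k * phi0 a b c)
          - 2 * (χ i j k * (∑ e, psi0 i j k e * psi0 e a b c)) := by
      intro i j k
      have h0 := IMR a b c i j k
      rw [Fim, FimD] at h0
      have h1 : (∑ d, (HC2R i j k a d * phi0 d b c + HC2R i j k b d * phi0 a d c
          + HC2R i j k c d * phi0 a b d))
          = 4 * trip i j k a b c + 2 * (phi0 i j k * phi0 a b c)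
            - 2 * ∑ e, psi0 i j k e * psi0 e a b c := by linarith
      rw [h1]; ring
    simp only [imr]
    simp only [Finset.sum_add_distrib, Finset.sum_sub_distrib, ← Finset.mul_sum]
    have P1 : (∑ i, ∑ j, ∑ k, χ i j k * trip i j k a b c) = 6 * χ a b c := by
      have := DEC χ hχ₁ hχ₂ a b c
      linarith
    have P2 : (∑ i, ∑ j, ∑ k, χ i j k * phi0 i j k * phi0 a b c) = 0 := by
      simp only [← Finset.sum_mul]
      rw [hS, zero_mul]
    have P3 : (∑ i, ∑ j, ∑ k, χ i j k * (∑ e, psi0 i j k e * psi0 e a b c)) = 0 := by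
      rw [← contractV χ (fun e => psi0 e a b c)]
      rw [Finset.sum_congr rfl fun e _ => by rw [hV e, zero_mul]]
      simp
    rw [P1, P2, P3]
    ring

/-- A totally antisymmetric 3-tensor `χ` on `ℝ⁷` lies in `Λ³₂₇`,
i.e. `χ = i_φ(h)` for some traceless symmetric `h`, if and only if
`Σ χ_{abc} φ₀^{abc} = 0` and `Σ χ_{mnp} ψ₀^{mnp}{}_a = 0` for every `a`
(the characterization `Λ³₂₇ = {χ : χ ∧ φ₀ = 0 and χ ∧ ψ₀ = 0}`). -/
theorem lambda3_27_characterization (χ : Fin 7 → Fin 7 → Fin 7 → ℝ)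
    (hχ₁ : ∀ a b c, χ a b c = -χ b a c) (hχ₂ : ∀ a b c, χ a b c = -χ a c b) :
    (∃ h : Matrix (Fin 7) (Fin 7) ℝ, h.transpose = h ∧ h.trace = 0 ∧
        ∀ a b c, χ a b c = iphi h a b c) ↔
      ((∑ a, ∑ b, ∑ c, χ a b c * phi0 a b c) = 0 ∧
        ∀ a, (∑ m, ∑ n, ∑ p, χ m n p * psi0 m n p a) = 0) := by
  constructor
  · rintro ⟨h, hsymM, htrM, hiphi⟩
    have hsym : ∀ x y, h x y = h y x := by
      intro x y
      have := congrFun (congrFun hsymM y) x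
      rw [Matrix.transpose_apply] at this
      exact this
    have htr : (∑ x, h x x) = 0 := by
      have : h.trace = ∑ x, h x x := rfl
      rw [← this, htrM]
    constructor
    · simp only [hiphi]
      exact forward1 h htr
    · intro a
      simp only [hiphi]
      exact forward2 h hsym a
  · rintro ⟨hS, hV⟩
    exact reverseMain χ hχ₁ hχ₂ hS hV
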